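/- For r ≥ 2, every finite-index subgroup of ℤ^(r-1) ⋊ Sym(r) has abelianization of torsion-free rank at most r - 1, and the finite-index subgroup ℤ^(r-1) has abelianization of rank exactly r - 1. -/

import Mathlib

open SemidirectProduct Finset

/-- For `r ≥ 2`, every finite-index subgroup of `ℤ^(r-1) ⋊ Sym(r)` has abelianization
of torsion-free rank at most `r - 1`, and the subgroup `ℤ^(r-1)` has finite index and
abelianization of rank exactly `r - 1`. -/
theorem semidirect_rank_bound (r : ℕ) (hr : 2 ≤ r)
    (μ : Equiv.Perm (Fin r) →* MulAut (Multiplicative (Fin (r - 1) → ℤ))) :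
    (∀ H : Subgroup (Multiplicative (Fin (r - 1) → ℤ) ⋊[μ] Equiv.Perm (Fin r)),
      H.FiniteIndex →
        Module.rank ℤ (Additive (Abelianization H)) ≤ ((r - 1 : ℕ) : Cardinal)) ∧
    (SemidirectProduct.inl (φ := μ)).range.FiniteIndex ∧
    Module.rank ℤ (Additive (Abelianization (SemidirectProduct.inl (φ := μ)).range))
      = ((r - 1 : ℕ) : Cardinal) := by
  refine ⟨?_, ?_, ?_⟩
  · intro H _
    apply rank_le
    intro s li
    set N := Multiplicative (Fin (r - 1) → ℤ)
    set G := N ⋊[μ] Equiv.Perm (Fin r)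
    set k := Fintype.card (Equiv.Perm (Fin r)) with hk
    have hkpos : 0 < k := Fintype.card_pos
    have lift1 : ∀ i : s, ∃ h : H, Abelianization.of h = Additive.toMul i.1 := fun i =>
      Quotient.inductionOn' (Additive.toMul i.1) fun a => ⟨a, rfl⟩
    choose h hh using lift1
    have mem : ∀ i : s, ((h i : G)) ^ k ∈ (SemidirectProduct.inl (φ := μ)).range := by
      intro i
      rw [range_inl_eq_ker_rightHom, MonoidHom.mem_ker, map_pow, hk, pow_card_eq_one]
    choose n hn using mem
    have liF : LinearIndependent ℤ (fun i : s => Multiplicative.toAdd (n i)) := by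
      rw [Fintype.linearIndependent_iff]
      intro g hg
      have hprod : (∏ i : s, (n i) ^ (g i)) = 1 := by
        apply Multiplicative.toAdd.injective
        simpa [toAdd_zpow] using hg
      set fam : s → H := fun i => ((h i) ^ k) ^ (g i) with hfam
      have hcoe : ∀ i : s, ((fam i : G)) = SemidirectProduct.inl ((n i) ^ (g i)) := by
        intro i
        rw [hfam]
        push_cast
        rw [← hn, ← map_zpow]
      have hcomm : ((Finset.univ : Finset s) : Set s).Pairwise (Function.onFun Commute fam) := by
        intro i _ j _ _
        unfold Function.onFun Commute SemiconjBy
        apply Subtype.ext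
        push_cast
        rw [hcoe i, hcoe j, ← map_mul, ← map_mul, mul_comm]
      set P : H := Finset.univ.noncommProd fam hcomm with hP
      have hPcoe : (P : G) = SemidirectProduct.inl (∏ i : s, (n i) ^ (g i)) := by
        calc (P : G) = H.subtype P := rfl
          _ = Finset.univ.noncommProd (fun i => H.subtype (fam i)) _ :=
              Finset.map_noncommProd _ _ hcomm _
          _ = Finset.univ.noncommProd (fun i => SemidirectProduct.inl (φ := μ) ((n i) ^ (g i)))
              (fun x _ y _ _ => Commute.all _ _ |>.map _) :=
              Finset.noncommProd_congr rfl (fun i _ => hcoe i) _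
          _ = SemidirectProduct.inl
              (Finset.univ.noncommProd (fun i : s => (n i) ^ (g i))
                (fun x _ y _ _ => Commute.all _ _)) :=
              (Finset.map_noncommProd _ _ _ _).symm
          _ = SemidirectProduct.inl (∏ i : s, (n i) ^ (g i)) := by
              rw [Finset.noncommProd_eq_prod]
      have hP1 : P = 1 := Subtype.ext (by rw [hPcoe, hprod, map_one]; rfl)
      have hAb : (∏ i : s, (Additive.toMul (α := Abelianization H) i.1) ^ ((k : ℤ) * g i)) = 1 := by
        have h2 := congrArg (Abelianization.of (G := H)) hP1
        rw [map_one, hP, Finset.map_noncommProd, Finset.noncommProd_eq_prod] at h2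
        rw [← h2]
        refine Finset.prod_congr rfl fun i _ => ?_
        rw [hfam, map_zpow, map_pow, hh, ← zpow_natCast, ← zpow_mul]
      have key : ∀ i : s, (k : ℤ) * g i = 0 := by
        rw [Fintype.linearIndependent_iff] at li
        apply li
        apply Additive.toMul.injective
        simpa [toMul_sum, toMul_zsmul] using hAb
      intro i
      have hkz : (k : ℤ) ≠ 0 := Int.natCast_ne_zero.mpr hkpos.ne'
      exact (mul_eq_zero.mp (key i)).resolve_left hkz
    have hle := liF.cardinal_le_rank
    rw [Cardinal.mk_coe_finset, rank_fin_fun] at hle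
    exact_mod_cast hle
  · rw [range_inl_eq_ker_rightHom]
    infer_instance
  · have e : Abelianization (SemidirectProduct.inl (φ := μ)).range
        ≃* Multiplicative (Fin (r - 1) → ℤ) :=
      (MulEquiv.abelianizationCongr
        (MonoidHom.ofInjective (inl_injective (φ := μ))).symm).trans
        Abelianization.equivOfComm.symm
    have e' : Additive (Abelianization (SemidirectProduct.inl (φ := μ)).range)
        ≃+ (Fin (r - 1) → ℤ) :=
      (MulEquiv.toAdditive e).trans (AddEquiv.additiveMultiplicative _)
    rw [e'.toIntLinearEquiv.rank_eq, rank_fin_fun]
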